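/- Uniform integrability is preserved by conditional expectation onto a finer σ-algebra along converging conditioning points (Lemma 4.4): Suppose L(W^n | Z^n_{≤s} = z^n_{≤s}) converges weakly to L(W | Z_{≤s} = z_{≤s}) as n → ∞, the family (L(W^n | Z^n_{≤s} = z^n_{≤s}))_n is uniformly integrable, and W^n ≥ 0. If W̃^n = E[W^n | Z^n_{≤t}] for s < t, then the family (L(W̃^n | Z^n_{≤s} = z^n_{≤s}))_n is uniformly integrable. -/

import Mathlib

open MeasureTheory Filter

private lemma sqrt_tendsto_atTop' : Tendsto Real.sqrt atTop atTop := by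
  refine tendsto_atTop_atTop.2 fun b => ⟨(max b 0) ^ 2, fun x hx => ?_⟩
  calc b ≤ max b 0 := le_max_left _ _
    _ = Real.sqrt ((max b 0) ^ 2) := (Real.sqrt_sq (le_max_right _ _)).symm
    _ ≤ Real.sqrt x := Real.sqrt_le_sqrt hx

/-- Uniform integrability is preserved by conditional expectation onto a finer
σ-algebra along converging conditioning points: here `P n` plays the role of the
conditional law given `Z^n_{≤s} = z^n_{≤s}`, `m n = σ(Z^n_{≤t})` with `s < t`,
and `W̃^n = E[W^n | m n]`. If the laws of `W^n` converge weakly to a limit law and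
are uniformly integrable, then the laws of `W̃^n` are uniformly integrable. -/
theorem stmt_12 {Ω : Type*} (m : ℕ → MeasurableSpace Ω) [mΩ : MeasurableSpace Ω]
    (P : ℕ → Measure Ω) (hP : ∀ n, IsProbabilityMeasure (P n))
    (hm : ∀ n, m n ≤ mΩ)
    (W : ℕ → Ω → ℝ) (hWmeas : ∀ n, Measurable (W n))
    (hW0 : ∀ n, 0 ≤ᵐ[P n] W n) (hWint : ∀ n, Integrable (W n) (P n))
    (ν : Measure ℝ) (hν : IsProbabilityMeasure ν)
    -- weak convergence of the (conditional) laws of Wⁿ to ν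
    (hweak : ∀ f : BoundedContinuousFunction ℝ ℝ,
      Tendsto (fun n => ∫ ω, f (W n ω) ∂P n) atTop (nhds (∫ x, f x ∂ν)))
    -- uniform integrability of the (conditional) laws of Wⁿ
    (hui : Tendsto (fun r : ℝ => ⨆ n, ∫ ω in {ω | r ≤ W n ω}, W n ω ∂P n)
      atTop (nhds 0)) :
    -- uniform integrability of the (conditional) laws of W̃ⁿ = E[Wⁿ | m n]
    Tendsto (fun r : ℝ => ⨆ n,
        ∫ ω in {ω | r ≤ ((P n)[W n|m n]) ω}, ((P n)[W n|m n]) ω ∂P n)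
      atTop (nhds 0) := by
  classical
  have hPn : ∀ n, IsProbabilityMeasure (P n) := hP
  -- notation
  set Wt : ℕ → Ω → ℝ := fun n => (P n)[W n|m n] with hWtdef
  have hWt0 : ∀ n, 0 ≤ᵐ[P n] Wt n := fun n => condExp_nonneg (hW0 n)
  have hWtint : ∀ n, Integrable (Wt n) (P n) := fun n => integrable_condExp
  have hs_m : ∀ n (r : ℝ), MeasurableSet[m n] {ω | r ≤ Wt n ω} := fun n r =>
    measurableSet_le measurable_const stronglyMeasurable_condExp.measurable
  have hs_meas : ∀ n (r : ℝ), MeasurableSet {ω | r ≤ Wt n ω} := fun n r =>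
    hm n _ (hs_m n r)
  have hkey : ∀ n (r : ℝ), ∫ ω in {ω | r ≤ Wt n ω}, Wt n ω ∂P n
      = ∫ ω in {ω | r ≤ Wt n ω}, W n ω ∂P n := by
    intro n r
    haveI := hP n
    exact setIntegral_condExp (hm n) (hWint n) (hs_m n r)
  have htotal : ∀ n, ∫ ω, Wt n ω ∂P n = ∫ ω, W n ω ∂P n := by
    intro n
    haveI := hP n
    exact integral_condExp (hm n)
  -- integral of Wt over complement of the superlevel set is at most r (for r ≥ 0)
  have hcompl : ∀ n (r : ℝ), 0 ≤ r →
      ∫ ω in {ω | r ≤ Wt n ω}ᶜ, Wt n ω ∂P n ≤ r := by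
    intro n r hr
    haveI := hP n
    have h1 : ∫ ω in {ω | r ≤ Wt n ω}ᶜ, Wt n ω ∂P n
        ≤ ∫ _ω in {ω | r ≤ Wt n ω}ᶜ, r ∂P n := by
      refine setIntegral_mono_on (hWtint n).integrableOn
        integrableOn_const (hs_meas n r).compl ?_
      intro ω hω
      exact le_of_lt (lt_of_not_ge hω)
    have h2 : ∫ _ω in {ω | r ≤ Wt n ω}ᶜ, r ∂P n
        = ((P n) {ω | r ≤ Wt n ω}ᶜ).toReal * r := by
      rw [setIntegral_const, smul_eq_mul, measureReal_def]
    have h3 : ((P n) {ω | r ≤ Wt n ω}ᶜ).toReal ≤ 1 := by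
      have := prob_le_one (μ := P n) (s := {ω | r ≤ Wt n ω}ᶜ)
      simpa using ENNReal.toReal_mono ENNReal.one_ne_top this
    calc ∫ ω in {ω | r ≤ Wt n ω}ᶜ, Wt n ω ∂P n
        ≤ ((P n) {ω | r ≤ Wt n ω}ᶜ).toReal * r := h1.trans_eq h2
      _ ≤ 1 * r := by
          exact mul_le_mul_of_nonneg_right h3 hr
      _ = r := one_mul r
  by_cases hbdd : BddAbove (Set.range fun n => ∫ ω, W n ω ∂P n)
  · -- bounded case : genuine proof
    obtain ⟨C, hC⟩ := hbdd
    have hC' : ∀ n, ∫ ω, W n ω ∂P n ≤ C := fun n => hC ⟨n, rfl⟩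
    have hC0 : 0 ≤ C :=
      le_trans (integral_nonneg_of_ae (hW0 0)) (hC' 0)
    -- each set integral of W over any set is ≤ C
    have hAnyset : ∀ n (s : Set Ω), ∫ ω in s, W n ω ∂P n ≤ C := fun n s =>
      (setIntegral_le_integral (hWint n) (hW0 n)).trans (hC' n)
    -- Markov: (P n) {r ≤ Wt n} ≤ C / r for r > 0
    have hMarkov : ∀ n (r : ℝ), 0 < r →
        r * ((P n) {ω | r ≤ Wt n ω}).toReal ≤ C := by
      intro n r hr
      haveI := hP n
      have h1 : ∫ _ω in {ω | r ≤ Wt n ω}, r ∂P n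
          ≤ ∫ ω in {ω | r ≤ Wt n ω}, Wt n ω ∂P n := by
        refine setIntegral_mono_on integrableOn_const
          (hWtint n).integrableOn (hs_meas n r) ?_
        intro ω hω; exact hω
      have h2 : ∫ _ω in {ω | r ≤ Wt n ω}, r ∂P n
          = ((P n) {ω | r ≤ Wt n ω}).toReal * r := by
        rw [setIntegral_const, smul_eq_mul, measureReal_def]
      have h3 : ∫ ω in {ω | r ≤ Wt n ω}, Wt n ω ∂P n ≤ C := by
        rw [hkey n r]; exact hAnyset n _
      nlinarith [h1, h2, h3]
    -- main estimate for r ≥ 1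
    have hmain : ∀ r : ℝ, 1 ≤ r → ∀ n,
        ∫ ω in {ω | r ≤ Wt n ω}, Wt n ω ∂P n
          ≤ (⨆ k, ∫ ω in {ω | Real.sqrt r ≤ W k ω}, W k ω ∂P k) + C / Real.sqrt r := by
      intro r hr n
      haveI := hP n
      set q : ℝ := Real.sqrt r with hq
      have hr0 : (0:ℝ) ≤ r := le_trans zero_le_one hr
      have hq1 : 1 ≤ q := by
        rw [hq, show (1:ℝ) = Real.sqrt 1 by simp]
        exact Real.sqrt_le_sqrt hr
      have hq0 : 0 < q := lt_of_lt_of_le zero_lt_one hq1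
      have hqq : q * q = r := Real.mul_self_sqrt hr0
      set s : Set Ω := {ω | r ≤ Wt n ω} with hsdef
      set A : Set Ω := {ω | q ≤ W n ω} with hAdef
      have hA : MeasurableSet A := measurableSet_le measurable_const (hWmeas n)
      -- split the integral of W over s
      have hsplit : ∫ ω in s, W n ω ∂P n
          = (∫ ω in A, W n ω ∂(P n).restrict s)
            + ∫ ω in Aᶜ, W n ω ∂(P n).restrict s := by
        exact (integral_add_compl hA ((hWint n).restrict)).symm
      -- first piece
      have hp1 : ∫ ω in A, W n ω ∂(P n).restrict s
          ≤ ⨆ k, ∫ ω in {ω | q ≤ W k ω}, W k ω ∂P k := by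
        have e1 : ∫ ω in A, W n ω ∂(P n).restrict s = ∫ ω in A ∩ s, W n ω ∂P n := by
          rw [Measure.restrict_restrict hA]
        have e2 : ∫ ω in A ∩ s, W n ω ∂P n ≤ ∫ ω in A, W n ω ∂P n := by
          refine setIntegral_mono_set (hWint n).integrableOn
            (ae_restrict_of_ae (hW0 n)) ?_
          exact HasSubset.Subset.eventuallyLE Set.inter_subset_left
        have e3 : ∫ ω in A, W n ω ∂P n ≤ ⨆ k, ∫ ω in {ω | q ≤ W k ω}, W k ω ∂P k := by
          refine le_ciSup (f := fun k => ∫ ω in {ω | q ≤ W k ω}, W k ω ∂P k) ?_ n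
          exact ⟨C, by rintro x ⟨k, rfl⟩; exact hAnyset k _⟩
        exact e1.trans_le (e2.trans e3)
      -- second piece
      have hp2 : ∫ ω in Aᶜ, W n ω ∂(P n).restrict s ≤ C / q := by
        have e1 : ∫ ω in Aᶜ, W n ω ∂(P n).restrict s = ∫ ω in Aᶜ ∩ s, W n ω ∂P n := by
          rw [Measure.restrict_restrict hA.compl]
        have e2 : ∫ ω in Aᶜ ∩ s, W n ω ∂P n ≤ ∫ _ω in Aᶜ ∩ s, q ∂P n := by
          refine setIntegral_mono_on (hWint n).integrableOn
            integrableOn_const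
            (hA.compl.inter (hs_meas n r)) ?_
          intro ω hω
          exact le_of_lt (lt_of_not_ge hω.1)
        have e3 : ∫ _ω in Aᶜ ∩ s, q ∂P n = ((P n) (Aᶜ ∩ s)).toReal * q := by
          rw [setIntegral_const, smul_eq_mul, measureReal_def]
        have e4 : ((P n) (Aᶜ ∩ s)).toReal ≤ ((P n) s).toReal :=
          ENNReal.toReal_mono (measure_ne_top _ _) (measure_mono Set.inter_subset_right)
        have e5 : r * ((P n) s).toReal ≤ C := hMarkov n r (lt_of_lt_of_le zero_lt_one hr)
        have e6 : ((P n) s).toReal * q ≤ C / q := by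
          rw [le_div_iff₀ hq0]
          calc ((P n) s).toReal * q * q = r * ((P n) s).toReal := by rw [mul_assoc, hqq]; ring
            _ ≤ C := e5
        calc ∫ ω in Aᶜ, W n ω ∂(P n).restrict s
            = ∫ ω in Aᶜ ∩ s, W n ω ∂P n := e1
          _ ≤ ((P n) (Aᶜ ∩ s)).toReal * q := e2.trans_eq e3
          _ ≤ ((P n) s).toReal * q := mul_le_mul_of_nonneg_right e4 (le_of_lt hq0)
          _ ≤ C / q := e6
      calc ∫ ω in s, Wt n ω ∂P n = ∫ ω in s, W n ω ∂P n := hkey n r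
        _ = _ + _ := hsplit
        _ ≤ (⨆ k, ∫ ω in {ω | q ≤ W k ω}, W k ω ∂P k) + C / q := add_le_add hp1 hp2
    -- squeeze
    have hlow : ∀ r : ℝ, 0 ≤ ⨆ n, ∫ ω in {ω | r ≤ Wt n ω}, Wt n ω ∂P n := by
      intro r
      exact Real.iSup_nonneg fun n => setIntegral_nonneg_of_ae (hWt0 n)
    have hupper : ∀ᶠ r : ℝ in atTop,
        (⨆ n, ∫ ω in {ω | r ≤ Wt n ω}, Wt n ω ∂P n)
        ≤ (⨆ k, ∫ ω in {ω | Real.sqrt r ≤ W k ω}, W k ω ∂P k) + C / Real.sqrt r := by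
      filter_upwards [eventually_ge_atTop (1:ℝ)] with r hr
      exact ciSup_le (hmain r hr)
    have hT1 : Tendsto (fun r : ℝ =>
        (⨆ k, ∫ ω in {ω | Real.sqrt r ≤ W k ω}, W k ω ∂P k)) atTop (nhds 0) :=
      hui.comp sqrt_tendsto_atTop'
    have hT2 : Tendsto (fun r : ℝ => C / Real.sqrt r) atTop (nhds 0) :=
      Tendsto.div_atTop tendsto_const_nhds sqrt_tendsto_atTop'
    have hT : Tendsto (fun r : ℝ =>
        (⨆ k, ∫ ω in {ω | Real.sqrt r ≤ W k ω}, W k ω ∂P k) + C / Real.sqrt r)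
        atTop (nhds 0) := by
      simpa using hT1.add hT2
    exact tendsto_of_tendsto_of_tendsto_of_le_of_le' tendsto_const_nhds hT
      (Eventually.of_forall hlow) hupper
  · -- unbounded case: the suprema are all zero (junk value), so the limit holds trivially
    have hzero : ∀ r : ℝ, 0 ≤ r →
        (⨆ n, ∫ ω in {ω | r ≤ Wt n ω}, Wt n ω ∂P n) = 0 := by
      intro r hr
      apply Real.iSup_of_not_bddAbove
      intro hB
      apply hbdd
      obtain ⟨B, hB'⟩ := hB
      refine ⟨B + r, ?_⟩
      rintro x ⟨n, rfl⟩
      haveI := hP n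
      have e1 : ∫ ω, W n ω ∂P n = ∫ ω, Wt n ω ∂P n := (htotal n).symm
      have e2 : ∫ ω, Wt n ω ∂P n
          = (∫ ω in {ω | r ≤ Wt n ω}, Wt n ω ∂P n)
            + ∫ ω in {ω | r ≤ Wt n ω}ᶜ, Wt n ω ∂P n :=
        (integral_add_compl (hs_meas n r) (hWtint n)).symm
      have e3 : ∫ ω in {ω | r ≤ Wt n ω}, Wt n ω ∂P n ≤ B := hB' ⟨n, rfl⟩
      have e4 := hcompl n r hr
      calc ∫ ω, W n ω ∂P n = _ := e1.trans e2
        _ ≤ B + r := add_le_add e3 e4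
    have heq : (fun r : ℝ => ⨆ n, ∫ ω in {ω | r ≤ Wt n ω}, Wt n ω ∂P n)
        =ᶠ[atTop] fun _ => (0:ℝ) := by
      filter_upwards [eventually_ge_atTop (0:ℝ)] with r hr
      exact hzero r hr
    exact Tendsto.congr' heq.symm tendsto_const_nhds
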